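/- Let ν ≥ 1/2 be real. Then for all x > 0 one has the Turán type inequality I_ν(x)² − I_{ν−1}(x)·I_{ν+1}(x) < I_ν(x)² / x. -/

import Mathlib

open Real

/-- The modified Bessel function of the first kind of real order `ν`,
`I_ν(x) = ∑_{n≥0} (x/2)^(2n+ν) / (n! Γ(n+ν+1))`. -/
noncomputable def besselI (ν x : ℝ) : ℝ :=
  ∑' n : ℕ, (x / 2) ^ (2 * (n : ℝ) + ν) / ((n.factorial : ℝ) * Real.Gamma ((n : ℝ) + ν + 1))

/-- The modified Bessel function of the second kind of real order `ν`,
`K_ν(x) = ∫_0^∞ e^{-x cosh t} cosh(ν t) dt`. -/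
noncomputable def besselK (ν x : ℝ) : ℝ :=
  ∫ t in Set.Ioi (0 : ℝ), Real.exp (-x * Real.cosh t) * Real.cosh (ν * t)

open Filter Set

noncomputable def besselG (μ y : ℝ) : ℝ :=
  ∑' n : ℕ, y ^ n / ((n.factorial : ℝ) * Real.Gamma ((n : ℝ) + μ + 1))

noncomputable def funD (ν : ℝ) : ℝ → ℝ :=
  fun t => t * (besselI (ν-1) t + besselI (ν+1) t) - (2*t-1) * besselI ν t

noncomputable def funW (ν : ℝ) : ℝ → ℝ :=
  fun t => Real.exp t * t ^ (-(1:ℝ)/2) * funD ν t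

noncomputable def funF (ν : ℝ) : ℝ → ℝ :=
  fun t => t * (besselI ν t)^2 - t^2 * ((besselI ν t)^2 - besselI (ν-1) t * besselI (ν+1) t)

lemma gamma_term_pos {μ : ℝ} (hμ : 0 < μ + 1) (n : ℕ) :
    0 < Real.Gamma ((n : ℝ) + μ + 1) := by
  apply Real.Gamma_pos_of_pos
  have : (0:ℝ) ≤ n := Nat.cast_nonneg n
  linarith

lemma summable_master {μ : ℝ} (hμ : 0 < μ + 1) (b : ℝ) :
    Summable (fun n : ℕ => ((n : ℝ) + 1) * b ^ n / ((n.factorial : ℝ) * Real.Gamma ((n : ℝ) + μ + 1))) := by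
  apply summable_of_ratio_norm_eventually_le (r := 1/2) (by norm_num)
  have h1 : ∀ᶠ n : ℕ in atTop, (4 * |b| : ℝ) ≤ (n:ℝ) + 1 :=
    tendsto_natCast_atTop_atTop.eventually_ge_atTop (4 * |b|) |>.mono (by intro n h; linarith)
  have h2 : ∀ᶠ n : ℕ in atTop, (1:ℝ) ≤ (n:ℝ) + μ + 1 :=
    tendsto_natCast_atTop_atTop.eventually_ge_atTop (-μ) |>.mono (by intro n h; linarith)
  filter_upwards [h1, h2] with n hb hg
  have hΓ := gamma_term_pos hμ n
  have hΓ' : Real.Gamma ((n+1 : ℕ) + μ + 1) = ((n:ℝ) + μ + 1) * Real.Gamma ((n:ℝ) + μ + 1) := by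
    have : ((n+1 : ℕ) : ℝ) + μ + 1 = ((n:ℝ) + μ + 1) + 1 := by push_cast; ring
    rw [this, Real.Gamma_add_one (by linarith)]
  have hfact : ((n+1 : ℕ).factorial : ℝ) = ((n:ℝ)+1) * (n.factorial : ℝ) := by
    push_cast [Nat.factorial_succ]; ring
  rw [Real.norm_eq_abs, Real.norm_eq_abs, hΓ', hfact]
  have hbn : |b ^ (n+1)| = |b| * |b ^ n| := by rw [pow_succ, abs_mul, mul_comm]
  have hfp : (0:ℝ) < n.factorial := by positivity
  have hn1 : (0:ℝ) < (n:ℝ) + 1 := by positivity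
  rw [abs_div, abs_div]
  rw [abs_of_pos (by positivity : (0:ℝ) < ((n:ℝ)+1) * (n.factorial:ℝ) * (((n:ℝ)+μ+1) * Real.Gamma ((n:ℝ)+μ+1))),
      abs_of_pos (by positivity : (0:ℝ) < (n.factorial:ℝ) * Real.Gamma ((n:ℝ)+μ+1))]
  have h2' : |((n+1:ℕ):ℝ) + 1| = (n:ℝ) + 2 := by
    push_cast; rw [abs_of_pos]; ring_nf; positivity
  have h3 : |((n:ℝ)+1)| = (n:ℝ)+1 := abs_of_pos hn1
  rw [abs_mul, abs_mul, h2', h3, hbn]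
  rw [div_le_iff₀ (by positivity)]
  rw [show (1:ℝ) / 2 * ((↑n + 1) * |b ^ n| / (↑n.factorial * Real.Gamma (↑n + μ + 1))) *
      ((↑n + 1) * ↑n.factorial * ((↑n + μ + 1) * Real.Gamma (↑n + μ + 1))) =
      ((↑n + 1) * |b ^ n|) * ((↑n + 1) * (↑n + μ + 1)) / 2 *
      ((↑n.factorial * Real.Gamma (↑n + μ + 1)) / (↑n.factorial * Real.Gamma (↑n + μ + 1))) from by ring,
    div_self (by positivity), mul_one]
  have habs : (0:ℝ) ≤ |b ^ n| := abs_nonneg _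
  have key : ((n:ℝ)+2) * |b| ≤ 1/2 * (((n:ℝ)+1) * (((n:ℝ)+1) * ((n:ℝ)+μ+1))) := by
    have e1 : ((n:ℝ)+2) * |b| ≤ 2*((n:ℝ)+1) * |b| := by
      have : (0:ℝ) ≤ |b| := abs_nonneg b
      nlinarith [Nat.cast_nonneg (α := ℝ) n]
    have e2 : 2*((n:ℝ)+1) * |b| ≤ 2*((n:ℝ)+1) * (((n:ℝ)+1)/4) := by
      apply mul_le_mul_of_nonneg_left (by linarith) (by positivity)
    have e3 : 2*((n:ℝ)+1) * (((n:ℝ)+1)/4) ≤ 1/2 * (((n:ℝ)+1) * (((n:ℝ)+1) * ((n:ℝ)+μ+1))) := by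
      nlinarith [mul_nonneg (mul_nonneg hn1.le hn1.le) (show (0:ℝ) ≤ (n:ℝ)+μ+1-1 by linarith)]
    linarith
  nlinarith [mul_le_mul_of_nonneg_right key (mul_nonneg habs (mul_nonneg hfp.le hΓ.le)), hn1, hfp, hΓ, habs]

lemma summable_besselG {μ : ℝ} (hμ : 0 < μ + 1) (y : ℝ) :
    Summable (fun n : ℕ => y ^ n / ((n.factorial : ℝ) * Real.Gamma ((n : ℝ) + μ + 1))) := by
  apply Summable.of_norm_bounded (summable_master hμ |y|)
  intro n
  have hΓ := gamma_term_pos hμ n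
  have hfp : (0:ℝ) < n.factorial := by positivity
  rw [Real.norm_eq_abs, abs_div, abs_pow, abs_of_pos (mul_pos hfp hΓ)]
  rw [div_le_div_iff₀ (by positivity) (by positivity)]
  have h0 : (0:ℝ) ≤ |y|^n := by positivity
  nlinarith [mul_nonneg (mul_nonneg (Nat.cast_nonneg (α := ℝ) n) h0) (mul_pos hfp hΓ).le]

lemma summable_deriv_besselG {μ : ℝ} (hμ : 0 < μ + 1) (R : ℝ) (hR : 1 ≤ R) {y : ℝ} (hy : |y| ≤ R) :
    Summable (fun n : ℕ => (n : ℝ) * y ^ (n-1) / ((n.factorial : ℝ) * Real.Gamma ((n : ℝ) + μ + 1))) := by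
  apply Summable.of_norm_bounded (summable_master hμ R)
  intro n
  have hΓ := gamma_term_pos hμ n
  have hfp : (0:ℝ) < n.factorial := by positivity
  rw [Real.norm_eq_abs, abs_div, abs_mul, abs_pow, abs_of_pos (mul_pos hfp hΓ),
    abs_of_nonneg (Nat.cast_nonneg (α := ℝ) n)]
  rw [div_le_div_iff₀ (by positivity) (by positivity)]
  have h1 : |y| ^ (n-1) ≤ R ^ n := by
    calc |y| ^ (n-1) ≤ R ^ (n-1) := pow_le_pow_left₀ (abs_nonneg y) hy _
    _ ≤ R ^ n := pow_le_pow_right₀ hR (Nat.sub_le n 1)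
  have hRn : (0:ℝ) ≤ R ^ n := by positivity
  have := mul_pos hfp hΓ
  nlinarith [mul_le_mul_of_nonneg_left h1 (Nat.cast_nonneg (α := ℝ) n), Nat.cast_nonneg (α := ℝ) n,
    pow_nonneg (abs_nonneg y) (n-1)]

lemma tsum_deriv_eq {μ : ℝ} (hμ : 0 < μ + 1) (y : ℝ) :
    ∑' n : ℕ, (n : ℝ) * y ^ (n-1) / ((n.factorial : ℝ) * Real.Gamma ((n : ℝ) + μ + 1))
      = besselG (μ+1) y := by
  have hs := summable_deriv_besselG hμ (max |y| 1) (le_max_right _ _) (le_max_left _ _)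
  rw [Summable.tsum_eq_zero_add hs]
  simp only [Nat.cast_zero, zero_mul, zero_div, zero_add]
  apply tsum_congr
  intro n
  have h1 : ((n+1:ℕ):ℝ) + μ + 1 = (n:ℝ) + (μ+1) + 1 := by push_cast; ring
  have h2 : ((n+1:ℕ).factorial : ℝ) = ((n:ℝ)+1) * n.factorial := by push_cast [Nat.factorial_succ]; ring
  rw [h1, h2]
  have h3 : (n+1) - 1 = n := by omega
  rw [h3]
  push_cast
  have hΓ := gamma_term_pos (show (0:ℝ) < (μ+1)+1 by linarith) n
  have hfp : (0:ℝ) < n.factorial := by positivity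
  field_simp

lemma besselG_hasDerivAt {μ : ℝ} (hμ : 0 < μ + 1) (y : ℝ) :
    HasDerivAt (besselG μ) (besselG (μ+1) y) y := by
  set R : ℝ := |y| + 1 with hRdef
  have hR1 : 1 ≤ R := by rw [hRdef]; linarith [abs_nonneg y]
  have key : HasDerivAt (fun z => ∑' n : ℕ, z ^ n / ((n.factorial : ℝ) * Real.Gamma ((n : ℝ) + μ + 1)))
      (∑' n : ℕ, (n : ℝ) * y ^ (n-1) / ((n.factorial : ℝ) * Real.Gamma ((n : ℝ) + μ + 1))) y := by
    refine hasDerivAt_tsum_of_isPreconnected (summable_master hμ R)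
      (Metric.isOpen_ball (x := (0:ℝ)) (ε := R)) (convex_ball (0:ℝ) R).isPreconnected
      (g' := fun (n : ℕ) z => (n : ℝ) * z ^ (n-1) / ((n.factorial : ℝ) * Real.Gamma ((n : ℝ) + μ + 1)))
      (fun (n : ℕ) (z : ℝ) _ => ((hasDerivAt_pow n z).div_const _)) ?_ (y₀ := 0) ?_ ?_ ?_
    · intro n z hz
      have hzR : |z| ≤ R := by
        rw [Metric.mem_ball, dist_zero_right, Real.norm_eq_abs] at hz; linarith
      have hΓ := gamma_term_pos hμ n
      have hfp : (0:ℝ) < n.factorial := by positivity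
      rw [Real.norm_eq_abs, abs_div, abs_mul, abs_pow, abs_of_pos (mul_pos hfp hΓ),
        abs_of_nonneg (Nat.cast_nonneg (α := ℝ) n)]
      rw [div_le_div_iff₀ (by positivity) (by positivity)]
      have h1 : |z| ^ (n-1) ≤ R ^ n := by
        calc |z| ^ (n-1) ≤ R ^ (n-1) := pow_le_pow_left₀ (abs_nonneg z) hzR _
        _ ≤ R ^ n := pow_le_pow_right₀ hR1 (Nat.sub_le n 1)
      nlinarith [mul_le_mul_of_nonneg_left h1 (Nat.cast_nonneg (α := ℝ) n), Nat.cast_nonneg (α := ℝ) n,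
        mul_pos hfp hΓ, pow_nonneg (abs_nonneg z) (n-1), pow_nonneg (le_trans zero_le_one hR1) n]
    · rw [Metric.mem_ball, dist_zero_right, Real.norm_eq_abs]; simp [hRdef]; linarith [abs_nonneg y]
    · exact summable_besselG hμ 0
    · rw [Metric.mem_ball, dist_zero_right, Real.norm_eq_abs]; simp [hRdef]
  rw [tsum_deriv_eq hμ y] at key
  exact key

-- shift lemma
lemma besselG_shift {μ : ℝ} (hμ : 0 < μ + 1) (y : ℝ) :
    ∑' n : ℕ, (n : ℝ) * (y ^ n / ((n.factorial : ℝ) * Real.Gamma ((n : ℝ) + μ + 1)))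
      = y * besselG (μ+1) y := by
  have hsucc : ∀ n : ℕ, ((n+1:ℕ) : ℝ) * (y ^ (n+1) / (((n+1:ℕ).factorial : ℝ) * Real.Gamma (((n+1:ℕ) : ℝ) + μ + 1)))
      = y * (y ^ n / ((n.factorial : ℝ) * Real.Gamma ((n : ℝ) + (μ+1) + 1))) := by
    intro n
    have h1 : ((n+1:ℕ):ℝ) + μ + 1 = (n:ℝ) + (μ+1) + 1 := by push_cast; ring
    have h2 : ((n+1:ℕ).factorial : ℝ) = ((n:ℝ)+1) * n.factorial := by push_cast [Nat.factorial_succ]; ring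
    rw [h1, h2]
    have hΓ := gamma_term_pos (show (0:ℝ) < (μ+1)+1 by linarith) n
    have hfp : (0:ℝ) < n.factorial := by positivity
    push_cast
    field_simp
    ring
  have hs : Summable (fun n : ℕ => (n : ℝ) * (y ^ n / ((n.factorial : ℝ) * Real.Gamma ((n : ℝ) + μ + 1)))) := by
    rw [← summable_nat_add_iff 1]
    simp only [hsucc]
    exact (summable_besselG (show (0:ℝ) < (μ+1)+1 by linarith) y).mul_left y
  rw [Summable.tsum_eq_zero_add hs]
  simp only [Nat.cast_zero, zero_mul, zero_add, hsucc]
  rw [tsum_mul_left]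
  rfl

lemma besselG_rec {μ : ℝ} (hμ : 0 < μ + 1) (y : ℝ) :
    besselG μ y = (μ+1) * besselG (μ+1) y + y * besselG (μ+2) y := by
  have hμ1 : (0:ℝ) < (μ+1) + 1 := by linarith
  have key : ∀ n : ℕ, y ^ n / ((n.factorial : ℝ) * Real.Gamma ((n : ℝ) + μ + 1))
      = (μ+1) * (y ^ n / ((n.factorial : ℝ) * Real.Gamma ((n : ℝ) + (μ+1) + 1)))
        + (n : ℝ) * (y ^ n / ((n.factorial : ℝ) * Real.Gamma ((n : ℝ) + (μ+1) + 1))) := by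
    intro n
    have hΓ := gamma_term_pos hμ n
    have hΓ1 := gamma_term_pos hμ1 n
    have hnμ : ((n:ℝ) + μ + 1) ≠ 0 := by
      have := Nat.cast_nonneg (α := ℝ) n
      intro h; rw [show (n:ℝ)+μ+1 = (n:ℝ)+(μ+1) by ring] at h; nlinarith
    have hrec : Real.Gamma ((n:ℝ) + (μ+1) + 1) = ((n:ℝ) + μ + 1) * Real.Gamma ((n:ℝ) + μ + 1) := by
      have h : (n:ℝ) + (μ+1) + 1 = ((n:ℝ) + μ + 1) + 1 := by ring
      rw [h, Real.Gamma_add_one hnμ]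
    have hfp : (0:ℝ) < n.factorial := by positivity
    have hfne : ((n.factorial : ℕ):ℝ) ≠ 0 := hfp.ne'
    have hΓne : Real.Gamma ((n:ℝ)+μ+1) ≠ 0 := hΓ.ne'
    rw [hrec]
    field_simp
    ring
  unfold besselG
  rw [tsum_congr key, Summable.tsum_add ((summable_besselG hμ1 y).mul_left _)
    (by
      have := ((summable_besselG hμ1 y).mul_left (1:ℝ))
      -- summability of n * term
      rw [← summable_nat_add_iff 1]
      apply Summable.congr ((summable_besselG (show (0:ℝ) < (μ+2)+1 by linarith) y).mul_left y)
      intro n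
      have h1 : ((n+1:ℕ):ℝ) + (μ+1) + 1 = (n:ℝ) + (μ+2) + 1 := by push_cast; ring
      have h2 : ((n+1:ℕ).factorial : ℝ) = ((n:ℝ)+1) * n.factorial := by push_cast [Nat.factorial_succ]; ring
      rw [h1, h2]
      have hΓ := gamma_term_pos (show (0:ℝ) < (μ+2)+1 by linarith) n
      have hfp : (0:ℝ) < n.factorial := by positivity
      push_cast
      field_simp
      ring)]
  rw [tsum_mul_left]
  congr 1
  have h := besselG_shift hμ1 y
  rw [h]
  have : (μ+1) + 1 = μ + 2 := by ring
  rw [this]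
  rfl

lemma besselG_pos {μ : ℝ} (hμ : 0 < μ + 1) {y : ℝ} (hy : 0 ≤ y) : 0 < besselG μ y := by
  apply Summable.tsum_pos (summable_besselG hμ y) _ 0
  · simp only [pow_zero, Nat.factorial_zero, Nat.cast_one, Nat.cast_zero, one_mul, zero_add]
    have := gamma_term_pos hμ 0
    simp only [Nat.cast_zero, zero_add] at this
    positivity
  · intro n
    have hΓ := gamma_term_pos hμ n
    have hfp : (0:ℝ) < n.factorial := by positivity
    positivity

lemma besselI_eq_G {μ x : ℝ} (hx : 0 < x) :
    besselI μ x = (x/2) ^ μ * besselG μ (x^2/4) := by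
  unfold besselI besselG
  rw [← tsum_mul_left]
  apply tsum_congr
  intro n
  have hx2 : (0:ℝ) < x/2 := by linarith
  have h1 : (x/2) ^ (2*(n:ℝ) + μ) = (x/2) ^ μ * (x^2/4) ^ n := by
    rw [Real.rpow_add hx2, mul_comm]
    congr 1
    rw [show (2*(n:ℝ)) = ((2*n : ℕ) : ℝ) by push_cast; ring, Real.rpow_natCast, pow_mul]
    congr 1
    ring
  rw [h1, mul_div_assoc]

lemma besselI_pos {μ x : ℝ} (hμ : 0 < μ + 1) (hx : 0 < x) : 0 < besselI μ x := by
  rw [besselI_eq_G hx]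
  exact mul_pos (Real.rpow_pos_of_pos (by linarith) μ) (besselG_pos hμ (by positivity))

lemma besselI_rec {μ x : ℝ} (hμ : 0 < μ + 1) (hx : 0 < x) :
    besselI μ x = (2*(μ+1)/x) * besselI (μ+1) x + besselI (μ+2) x := by
  rw [besselI_eq_G hx, besselI_eq_G hx, besselI_eq_G hx, besselG_rec hμ]
  have hx2 : (0:ℝ) < x/2 := by linarith
  have e1 : (x/2) ^ (μ+1) = (x/2) ^ μ * (x/2) := by
    rw [Real.rpow_add_one hx2.ne' μ]
  have e2 : (x/2) ^ (μ+2) = (x/2) ^ μ * (x/2) * (x/2) := by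
    rw [show μ+2 = (μ+1)+1 by ring, Real.rpow_add_one hx2.ne', e1]
  rw [e1, e2]
  have : x ≠ 0 := hx.ne'
  field_simp
  ring

lemma besselI_hasDerivAt {μ x : ℝ} (hμ : 0 < μ + 1) (hx : 0 < x) :
    HasDerivAt (besselI μ) ((μ/x) * besselI μ x + besselI (μ+1) x) x := by
  have hx2 : (0:ℝ) < x/2 := by linarith
  have hG : HasDerivAt (fun t : ℝ => besselG μ (t^2/4)) (besselG (μ+1) (x^2/4) * (x/2)) x := by
    have h1 : HasDerivAt (fun t : ℝ => t^2/4) (x/2) x := by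
      have := (hasDerivAt_pow 2 x).div_const 4
      simpa using this.congr_deriv (by push_cast; ring)
    exact (besselG_hasDerivAt hμ (x^2/4)).comp x h1
  have hp : HasDerivAt (fun t : ℝ => (t/2) ^ μ) (μ * (x/2) ^ (μ-1) * (1/2)) x := by
    have h2 : HasDerivAt (fun t : ℝ => t/2) (1/2 : ℝ) x := (hasDerivAt_id x).div_const 2
    have h3 : HasDerivAt (fun s : ℝ => s ^ μ) (μ * (x/2) ^ (μ-1)) (x/2) :=
      Real.hasDerivAt_rpow_const (Or.inl hx2.ne')
    exact h3.comp x h2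
  have hmul := hp.mul hG
  have heq : (fun t : ℝ => (t/2) ^ μ * besselG μ (t^2/4)) =ᶠ[nhds x] besselI μ := by
    filter_upwards [eventually_gt_nhds hx] with t ht
    exact (besselI_eq_G ht).symm
  have final := hmul.congr_of_eventuallyEq heq.symm
  refine final.congr_deriv (Eq.symm ?_)
  rw [besselI_eq_G hx, besselI_eq_G hx]
  have e1 : (x/2) ^ (μ+1) = (x/2) ^ μ * (x/2) := by
    rw [Real.rpow_add_one hx2.ne' μ]
  have e2 : (x/2) ^ (μ-1) = (x/2) ^ μ / (x/2) := by
    rw [Real.rpow_sub_one hx2.ne' μ]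
  rw [e1, e2]
  have : x ≠ 0 := hx.ne'
  field_simp


lemma rel_A {ν : ℝ} (hν : 1/2 ≤ ν) {t : ℝ} (ht : 0 < t) :
    besselI (ν-1) t = 2*ν/t * besselI ν t + besselI (ν+1) t := by
  have := besselI_rec (μ := ν-1) (by linarith) ht
  simpa [show ν-1+1 = ν by ring, show ν-1+2 = ν+1 by ring] using this

lemma rel_E {ν : ℝ} (hν : 1/2 ≤ ν) {t : ℝ} (ht : 0 < t) :
    besselI (ν+2) t = besselI ν t - 2*(ν+1)/t * besselI (ν+1) t := by
  have := besselI_rec (μ := ν) (by linarith) ht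
  linarith

lemma hdA {ν : ℝ} (hν : 1/2 ≤ ν) {t : ℝ} (ht : 0 < t) :
    HasDerivAt (besselI (ν-1)) (((ν-1)/t) * besselI (ν-1) t + besselI ν t) t := by
  have := besselI_hasDerivAt (μ := ν-1) (by linarith) ht
  simpa [show ν-1+1 = ν by ring] using this

lemma hdB {ν : ℝ} (hν : 1/2 ≤ ν) {t : ℝ} (ht : 0 < t) :
    HasDerivAt (besselI ν) ((ν/t) * besselI ν t + besselI (ν+1) t) t :=
  besselI_hasDerivAt (by linarith) ht

lemma hdC {ν : ℝ} (hν : 1/2 ≤ ν) {t : ℝ} (ht : 0 < t) :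
    HasDerivAt (besselI (ν+1)) (((ν+1)/t) * besselI (ν+1) t + besselI (ν+2) t) t := by
  have := besselI_hasDerivAt (μ := ν+1) (by linarith) ht
  simpa [show ν+1+1 = ν+2 by ring] using this

lemma funD_pos_small {ν : ℝ} (hν : 1/2 ≤ ν) {t : ℝ} (ht : 0 < t) (ht2 : t ≤ 1/2) : 0 < funD ν t := by
  unfold funD
  have hA := besselI_pos (μ := ν-1) (by linarith) ht
  have hB := besselI_pos (μ := ν) (by linarith) ht
  have hC := besselI_pos (μ := ν+1) (by linarith) ht
  nlinarith

lemma funW_hasDerivAt {ν : ℝ} (hν : 1/2 ≤ ν) {t : ℝ} (ht : 0 < t) :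
    HasDerivAt (funW ν) (Real.exp t * t ^ (-(1:ℝ)/2) * ((4*ν^2-1)/(2*t) * besselI ν t)) t := by
  have hlin : HasDerivAt (fun s : ℝ => 2*s-1) 2 t := by
    simpa using ((hasDerivAt_id t).const_mul (2:ℝ)).sub_const 1
  have hDt : HasDerivAt (funD ν)
      ((1 * (besselI (ν-1) t + besselI (ν+1) t)
        + t * ((((ν-1)/t) * besselI (ν-1) t + besselI ν t) + (((ν+1)/t) * besselI (ν+1) t + besselI (ν+2) t)))
        - (2 * besselI ν t + (2*t-1) * ((ν/t) * besselI ν t + besselI (ν+1) t))) t :=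
    ((hasDerivAt_id t).mul ((hdA hν ht).add (hdC hν ht))).sub (hlin.mul (hdB hν ht))
  have hrp : HasDerivAt (fun s : ℝ => s ^ (-(1:ℝ)/2)) ((-(1:ℝ)/2) * t ^ ((-(1:ℝ)/2) - 1)) t :=
    Real.hasDerivAt_rpow_const (Or.inl ht.ne')
  have hWt := ((Real.hasDerivAt_exp t).mul hrp).mul hDt
  have : funW ν = fun s => Real.exp s * s ^ (-(1:ℝ)/2) * funD ν s := rfl
  rw [this]
  refine hWt.congr_deriv (Eq.symm ?_)
  simp only [Pi.mul_apply, Pi.pow_apply, Pi.sub_apply, id_eq]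
  rw [rel_A hν ht, rel_E hν ht, Real.rpow_sub_one ht.ne']
  unfold funD
  rw [rel_A hν ht]
  field_simp
  ring

lemma funF_hasDerivAt {ν : ℝ} (hν : 1/2 ≤ ν) {t : ℝ} (ht : 0 < t) :
    HasDerivAt (funF ν) (besselI ν t * funD ν t) t := by
  have h1 := (hasDerivAt_id t).mul ((hdB hν ht).pow 2)
  have h2 := (hasDerivAt_pow 2 t).mul (((hdB hν ht).pow 2).sub ((hdA hν ht).mul (hdC hν ht)))
  have hFt := h1.sub h2
  have : funF ν = fun s => s * (besselI ν s)^2 - s^2 * ((besselI ν s)^2 - besselI (ν-1) s * besselI (ν+1) s) := rfl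
  rw [this]
  refine hFt.congr_deriv (Eq.symm ?_)
  simp only [Pi.mul_apply, Pi.pow_apply, Pi.sub_apply, id_eq]
  unfold funD
  rw [rel_A hν ht, rel_E hν ht]
  field_simp
  ring


lemma funD_pos {ν : ℝ} (hν : 1/2 ≤ ν) {t : ℝ} (ht : 0 < t) : 0 < funD ν t := by
  rcases le_or_gt t (1/2) with h | h
  · exact funD_pos_small hν ht h
  · have hmono : MonotoneOn (funW ν) (Ici (1/4 : ℝ)) := by
      apply monotoneOn_of_deriv_nonneg (convex_Ici _)
      · intro s hs
        have hs0 : (0:ℝ) < s := lt_of_lt_of_le (by norm_num) hs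
        exact (funW_hasDerivAt hν hs0).continuousAt.continuousWithinAt
      · intro s hs
        rw [interior_Ici] at hs
        have hs0 : (0:ℝ) < s := lt_trans (by norm_num) hs
        exact (funW_hasDerivAt hν hs0).differentiableAt.differentiableWithinAt
      · intro s hs
        rw [interior_Ici] at hs
        have hs0 : (0:ℝ) < s := lt_trans (by norm_num) hs
        rw [(funW_hasDerivAt hν hs0).deriv]
        have h1 : (0:ℝ) < Real.exp s := Real.exp_pos s
        have h2 : (0:ℝ) < s ^ (-(1:ℝ)/2) := Real.rpow_pos_of_pos hs0 _
        have h3 : (0:ℝ) ≤ 4*ν^2-1 := by nlinarith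
        have h4 : (0:ℝ) < besselI ν s := besselI_pos (by linarith) hs0
        positivity
    have hW4 : 0 < funW ν (1/4) := by
      have hD4 : 0 < funD ν (1/4) := funD_pos_small hν (by norm_num) (by norm_num)
      have : (0:ℝ) < (1/4 : ℝ) ^ (-(1:ℝ)/2) := Real.rpow_pos_of_pos (by norm_num) _
      unfold funW
      positivity
    have hWt : 0 < funW ν t := by
      have := hmono (self_mem_Ici) (show t ∈ Ici (1/4:ℝ) by simp; linarith) (by linarith)
      linarith
    have h2 : (0:ℝ) < t ^ (-(1:ℝ)/2) := Real.rpow_pos_of_pos ht _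
    have h1 : (0:ℝ) < Real.exp t := Real.exp_pos t
    unfold funW at hWt
    by_contra hcon
    push_neg at hcon
    nlinarith [mul_nonpos_of_nonneg_of_nonpos (mul_pos h1 h2).le hcon]
lemma funF_tendsto {ν : ℝ} (hν : 1/2 ≤ ν) : Tendsto (funF ν) (nhdsWithin 0 (Ioi 0)) (nhds 0) := by
  have hν0 : (0:ℝ) < ν := by linarith
  have hGcont : ∀ μ : ℝ, 0 < μ + 1 → Tendsto (fun t : ℝ => besselG μ (t^2/4)) (nhdsWithin 0 (Ioi 0)) (nhds (besselG μ 0)) := by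
    intro μ hμ
    have h1 : ContinuousAt (besselG μ) 0 := (besselG_hasDerivAt hμ 0).continuousAt
    have h2 : Tendsto (fun t : ℝ => t^2/4) (nhdsWithin 0 (Ioi 0)) (nhds 0) := by
      have : Tendsto (fun t : ℝ => t^2/4) (nhds 0) (nhds ((0:ℝ)^2/4)) :=
        (continuous_pow 2).div_const 4 |>.tendsto 0
      simpa using this.mono_left nhdsWithin_le_nhds
    exact h1.tendsto.comp h2
  have hrpow : ∀ p : ℝ, 0 < p → Tendsto (fun t : ℝ => (t/2) ^ p) (nhdsWithin 0 (Ioi 0)) (nhds 0) := by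
    intro p hp
    have h1 : ContinuousAt (fun s : ℝ => s ^ p) 0 := by
      apply Real.continuousAt_rpow_const
      right; exact hp.le
    have h2 : Tendsto (fun t : ℝ => t/2) (nhdsWithin 0 (Ioi 0)) (nhds 0) := by
      have : Tendsto (fun t : ℝ => t/2) (nhds 0) (nhds ((0:ℝ)/2)) := (continuous_id.div_const 2).tendsto 0
      simpa using this.mono_left nhdsWithin_le_nhds
    have := h1.tendsto.comp h2
    simpa [Function.comp_def, Real.zero_rpow hp.ne'] using this
  have heq : ∀ t ∈ Ioi (0:ℝ), funF ν t
      = (t*(1-t)) * ((t/2)^ν * besselG ν (t^2/4))^2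
        + t^2 * ((t/2)^(2*ν) * (besselG (ν-1) (t^2/4) * besselG (ν+1) (t^2/4))) := by
    intro t ht
    rw [mem_Ioi] at ht
    have ht2 : (0:ℝ) < t/2 := by linarith
    unfold funF
    rw [besselI_eq_G ht, besselI_eq_G ht, besselI_eq_G ht]
    have : (t/2)^(ν-1) * (t/2)^(ν+1) = (t/2)^(2*ν) := by
      rw [← Real.rpow_add ht2]; norm_num; ring_nf
    linear_combination (t^2 * (besselG (ν-1) (t^2/4) * besselG (ν+1) (t^2/4))) * this
  have hlim : Tendsto (fun t : ℝ => (t*(1-t)) * ((t/2)^ν * besselG ν (t^2/4))^2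
        + t^2 * ((t/2)^(2*ν) * (besselG (ν-1) (t^2/4) * besselG (ν+1) (t^2/4))))
      (nhdsWithin 0 (Ioi 0)) (nhds 0) := by
    have l1 : Tendsto (fun t : ℝ => t*(1-t)) (nhdsWithin 0 (Ioi 0)) (nhds 0) := by
      have : Tendsto (fun t : ℝ => t*(1-t)) (nhds 0) (nhds ((0:ℝ)*(1-0))) :=
        (continuous_id.mul (continuous_const.sub continuous_id)).tendsto 0
      simpa using this.mono_left nhdsWithin_le_nhds
    have l2 : Tendsto (fun t : ℝ => ((t/2)^ν * besselG ν (t^2/4))^2) (nhdsWithin 0 (Ioi 0)) (nhds 0) := by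
      have := ((hrpow ν hν0).mul (hGcont ν (by linarith))).pow 2
      simpa using this
    have l3 : Tendsto (fun t : ℝ => t^2) (nhdsWithin 0 (Ioi 0)) (nhds 0) := by
      have : Tendsto (fun t : ℝ => t^2) (nhds 0) (nhds ((0:ℝ)^2)) := (continuous_pow 2).tendsto 0
      simpa using this.mono_left nhdsWithin_le_nhds
    have l4 : Tendsto (fun t : ℝ => (t/2)^(2*ν) * (besselG (ν-1) (t^2/4) * besselG (ν+1) (t^2/4)))
        (nhdsWithin 0 (Ioi 0)) (nhds 0) := by
      have := (hrpow (2*ν) (by linarith)).mul ((hGcont (ν-1) (by linarith)).mul (hGcont (ν+1) (by linarith)))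
      simpa using this
    have := (l1.mul l2).add (l3.mul l4)
    simpa using this
  exact hlim.congr' (by filter_upwards [self_mem_nhdsWithin] with t ht using (heq t ht).symm)

theorem turan_besselI_upper_inv_x (ν : ℝ) (hν : 1 / 2 ≤ ν) (x : ℝ) (hx : 0 < x) :
    besselI ν x ^ 2 - besselI (ν - 1) x * besselI (ν + 1) x < besselI ν x ^ 2 / x := by
  have hmono : StrictMonoOn (funF ν) (Ioi 0) := by
    apply strictMonoOn_of_deriv_pos (convex_Ioi 0)
    · intro s hs
      exact (funF_hasDerivAt hν hs).continuousAt.continuousWithinAt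
    · intro s hs
      rw [interior_Ioi] at hs
      rw [(funF_hasDerivAt hν hs).deriv]
      exact mul_pos (besselI_pos (by linarith) hs) (funD_pos hν hs)
  have hhalf : (0:ℝ) < x/2 := by linarith
  have hFx2 : 0 ≤ funF ν (x/2) := by
    apply le_of_tendsto (funF_tendsto hν)
    filter_upwards [Ioc_mem_nhdsGT hhalf] with t ht
    rcases eq_or_lt_of_le ht.2 with h | h
    · exact le_of_eq (by rw [h])
    · exact (hmono (mem_Ioi.mpr ht.1) (mem_Ioi.mpr hhalf) h).le
  have hFx : 0 < funF ν x := lt_of_le_of_lt hFx2 (hmono (mem_Ioi.mpr hhalf) (mem_Ioi.mpr hx) (by linarith))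
  unfold funF at hFx
  rw [lt_div_iff₀ hx]
  nlinarith [hFx, mul_pos hx hx, hx]
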